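/- arXiv:1506.00928 — 3 statements merged into one kernel-verified Lean document; each statement's English description precedes it below -/
import Mathlib

section
/- With notation as above, if (x,y) = (phi_c(a,b), phi_{c^∨}(a,b)) for a crossover c in Cr(mu), then both a and b are midpoints of x and y: d(x,a)+d(a,y)=d(x,y) with |d(x,a)-d(a,y)|<=1, and similarly for b. -/
open Equiv

/-- Word metric on the symmetric group induced by the set of all transpositions:
`trdist a b` is the minimal number of transpositions whose product is `a⁻¹ * b`. -/
noncomputable def trdist {n : ℕ} (a b : Equiv.Perm (Fin n)) : ℕ :=
  sInf {k | ∃ l : List (Equiv.Perm (Fin n)), l.length = k ∧ (∀ t ∈ l, t.IsSwap) ∧ l.prod = a⁻¹ * b}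

/-- The set of midpoints of `a` and `b`. -/
noncomputable def midpts {n : ℕ} (a b : Equiv.Perm (Fin n)) : Set (Equiv.Perm (Fin n)) :=
  {m | trdist a m + trdist m b = trdist a b ∧ |(trdist a m : ℤ) - (trdist m b : ℤ)| ≤ 1}

/-- The forward cycle on a finite subset: cycles through its elements in increasing order. -/
def fwdCycle {n : ℕ} (s : Finset (Fin n)) : Equiv.Perm (Fin n) :=
  (s.sort (· ≤ ·)).formPerm

/-- The increasing list of minima of the cycles (orbits, including fixed points) of `p`. -/
noncomputable def cycleMins {n : ℕ} (p : Equiv.Perm (Fin n)) : List (Fin n) :=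
  Finset.sort
    (@Finset.filter _ (fun i => ∀ j, p.SameCycle i j → i ≤ j) (Classical.decPred _) Finset.univ) (· ≤ ·)

/-- The number of orbits (cycles, including fixed points) of `p` acting on `Fin n`. -/
noncomputable def cycleCount {n : ℕ} (p : Equiv.Perm (Fin n)) : ℕ :=
  (cycleMins p).length

/-- The ordered cycle type of `p`: the list of cycle (orbit) lengths of `p`,
ordered by increasing cycle minima. -/
noncomputable def orderedCycleType {n : ℕ} (p : Equiv.Perm (Fin n)) : List ℕ :=
  (cycleMins p).map (fun i =>
    (@Finset.filter _ (fun j => p.SameCycle i j) (Classical.decPred _) Finset.univ).card)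

/-- The canonical permutation with ordered cycle type `μ` (starting at offset `off`):
it cyclically permutes the first `μ₁` points in increasing order, then the next `μ₂` points,
and so on. -/
def canonPerm (n : ℕ) : List ℕ → ℕ → Equiv.Perm (Fin n)
  | [], _ => 1
  | m :: rest, off =>
      fwdCycle ((Finset.univ : Finset (Fin n)).filter (fun i => off ≤ i.val ∧ i.val < off + m)) *
        canonPerm n rest (off + m)

/-- `u` conjugates `p` into `q` and maps the sequence of cycle minima of `p`
to that of `q`, entrywise in order. -/
noncomputable def IsConjugator {n : ℕ} (p q u : Equiv.Perm (Fin n)) : Prop :=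
  u * p * u⁻¹ = q ∧ (cycleMins p).map u = cycleMins q

/-- A list of blocks is noncrossing: there are no `a < b < c < d` with `a, c` in one block
and `b, d` in a different block. -/
def NoncrossingList {n : ℕ} (L : List (Finset (Fin n))) : Prop :=
  ¬ ∃ a b c d : Fin n, a < b ∧ b < c ∧ c < d ∧
    ∃ s ∈ L, ∃ t ∈ L, s ≠ t ∧ a ∈ s ∧ c ∈ s ∧ b ∈ t ∧ d ∈ t

/-- The set of all midpoints of pairs `(a, b) ∈ A × B`. -/
noncomputable def midSet {n : ℕ} (A B : Finset (Equiv.Perm (Fin n))) :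
    Finset (Equiv.Perm (Fin n)) :=
  @Finset.filter _ (fun m => ∃ a ∈ A, ∃ b ∈ B, m ∈ midpts a b) (Classical.decPred _) Finset.univ

/-- The distance between two sets of permutations. -/
noncomputable def setDist {n : ℕ} (A B : Finset (Equiv.Perm (Fin n))) : ℕ :=
  sInf {k | ∃ a ∈ A, ∃ b ∈ B, trdist a b = k}

/-- The embedding of the hypercube `Z₂^N` into `S(n)` (for `2N ≤ n`) sending the `i`-th
standard basis vector to the transposition of `2i` and `2i+1` (0-indexed). -/
def cubeMap (N n : ℕ) (h : 2 * N ≤ n) (x : Fin N → ZMod 2) : Equiv.Perm (Fin n) :=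
  ((List.finRange N).map (fun i =>
    if x i = 1 then
      Equiv.swap (⟨2 * i.val, by have := i.isLt; omega⟩ : Fin n)
        ⟨2 * i.val + 1, by have := i.isLt; omega⟩
    else 1)).prod


theorem Equiv.Perm.inv_apply_self {α : Type*} (f : Equiv.Perm α) (x : α) : f⁻¹ (f x) = x :=
  f.symm_apply_apply x

theorem Equiv.Perm.apply_inv_self {α : Type*} (f : Equiv.Perm α) (x : α) : f (f⁻¹ x) = x :=
  f.apply_symm_apply x

namespace Stmt13Aux

open Equiv Module Submodule

variable {n : ℕ}

/-- Linear permutation action on `Fin n → ℚ`. -/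
def plin (g : Perm (Fin n)) : (Fin n → ℚ) →ₗ[ℚ] (Fin n → ℚ) where
  toFun f := f ∘ ⇑g⁻¹
  map_add' _ _ := rfl
  map_smul' _ _ := rfl

@[simp] lemma plin_apply (g : Perm (Fin n)) (f : Fin n → ℚ) (i : Fin n) :
    plin g f i = f (g⁻¹ i) := rfl

lemma plin_mul (g h : Perm (Fin n)) : plin (g * h) = (plin g).comp (plin h) := by
  refine LinearMap.ext fun f => funext fun i => ?_
  simp [plin_apply, mul_inv_rev, Equiv.Perm.mul_apply]

lemma plin_one : plin (1 : Perm (Fin n)) = LinearMap.id := by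
  refine LinearMap.ext fun f => funext fun i => ?_
  simp [plin_apply]

/-- `plin` as a linear equivalence. -/
noncomputable def plequiv (g : Perm (Fin n)) : (Fin n → ℚ) ≃ₗ[ℚ] (Fin n → ℚ) :=
  LinearEquiv.ofLinear (plin g) (plin g⁻¹)
    (by rw [← plin_mul]; simp [plin_one])
    (by rw [← plin_mul]; simp [plin_one])

@[simp] lemma plequiv_coe (g : Perm (Fin n)) :
    ((plequiv g : (Fin n → ℚ) ≃ₗ[ℚ] (Fin n → ℚ)) : (Fin n → ℚ) →ₗ[ℚ] (Fin n → ℚ)) = plin g := rfl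

lemma plin_inj (g : Perm (Fin n)) : Function.Injective (plin g) := by
  have : Function.Injective (plequiv g) := (plequiv g).injective
  exact this

/-- The "displacement" operator of a permutation. -/
noncomputable def Dl (g : Perm (Fin n)) : (Fin n → ℚ) →ₗ[ℚ] (Fin n → ℚ) :=
  plin g - LinearMap.id

@[simp] lemma Dl_apply (g : Perm (Fin n)) (f : Fin n → ℚ) (i : Fin n) :
    Dl g f i = f (g⁻¹ i) - f i := rfl

/-- Reflection length = rank of the displacement operator. -/
noncomputable def rk (g : Perm (Fin n)) : ℕ := finrank ℚ (LinearMap.range (Dl g))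

lemma mem_ker_Dl {g : Perm (Fin n)} {f : Fin n → ℚ} :
    f ∈ LinearMap.ker (Dl g) ↔ ∀ i, f (g i) = f i := by
  rw [LinearMap.mem_ker]
  constructor
  · intro h i
    have h2 : f (g⁻¹ (g i)) - f (g i) = 0 := congrFun h (g i)
    rw [Equiv.Perm.inv_apply_self] at h2
    exact (sub_eq_zero.mp h2).symm
  · intro h
    ext i
    have h2 := h (g⁻¹ i)
    rw [Equiv.Perm.apply_inv_self] at h2
    simp [Dl_apply, h2]

lemma rk_add_fix (g : Perm (Fin n)) :
    rk g + finrank ℚ (LinearMap.ker (Dl g)) = n := by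
  have h := LinearMap.finrank_range_add_finrank_ker (Dl g)
  rwa [Module.finrank_fin_fun] at h

lemma ker_Dl_inv (g : Perm (Fin n)) : LinearMap.ker (Dl g⁻¹) = LinearMap.ker (Dl g) := by
  ext f
  simp only [mem_ker_Dl]
  constructor <;> intro h i
  · have h2 := h (g i); rwa [Equiv.Perm.inv_apply_self, eq_comm] at h2
  · have h2 := h (g⁻¹ i); rwa [Equiv.Perm.apply_inv_self, eq_comm] at h2

lemma rk_inv (g : Perm (Fin n)) : rk g⁻¹ = rk g := by
  have h1 := rk_add_fix g
  have h2 := rk_add_fix g⁻¹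
  rw [ker_Dl_inv] at h2
  omega

lemma ker_Dl_conj (w g : Perm (Fin n)) :
    LinearMap.ker (Dl (w * g * w⁻¹)) =
      Submodule.map ((plequiv w : (Fin n → ℚ) ≃ₗ[ℚ] (Fin n → ℚ)) :
        (Fin n → ℚ) →ₗ[ℚ] (Fin n → ℚ)) (LinearMap.ker (Dl g)) := by
  ext f
  rw [Submodule.mem_map]
  constructor
  · intro hf
    rw [mem_ker_Dl] at hf
    refine ⟨plin w⁻¹ f, ?_, ?_⟩
    · rw [mem_ker_Dl]
      intro i
      have h2 := hf (w i)
      simp only [Equiv.Perm.mul_apply, Equiv.Perm.inv_apply_self] at h2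
      simpa [plin_apply] using h2
    · show plin w (plin w⁻¹ f) = f
      rw [← LinearMap.comp_apply, ← plin_mul]
      simp [plin_one]
  · rintro ⟨h, hh, rfl⟩
    rw [mem_ker_Dl] at hh ⊢
    intro i
    show h (w⁻¹ ((w * g * w⁻¹) i)) = h (w⁻¹ i)
    simp only [Equiv.Perm.mul_apply, Equiv.Perm.inv_apply_self]
    exact hh (w⁻¹ i)

lemma rk_conj (w g : Perm (Fin n)) : rk (w * g * w⁻¹) = rk g := by
  have h1 := rk_add_fix g
  have h2 := rk_add_fix (w * g * w⁻¹)
  rw [ker_Dl_conj w g, LinearEquiv.finrank_map_eq] at h2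
  omega

lemma Dl_mul_apply (g h : Perm (Fin n)) (x : Fin n → ℚ) :
    Dl (g * h) x = plin g (Dl h x) + Dl g x := by
  ext i
  simp only [Dl_apply, plin_apply, Pi.add_apply, mul_inv_rev, Equiv.Perm.mul_apply]
  ring

lemma rk_one : rk (1 : Perm (Fin n)) = 0 := by
  have h : Dl (1 : Perm (Fin n)) = 0 := by
    rw [Dl, plin_one]; exact sub_self _
  rw [rk, h, LinearMap.range_zero, finrank_bot]

lemma rk_mul_le (g h : Perm (Fin n)) : rk (g * h) ≤ rk g + rk h := by
  have hle : LinearMap.range (Dl (g * h)) ≤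
      LinearMap.range (Dl g) ⊔ Submodule.map (plin g) (LinearMap.range (Dl h)) := by
    rintro _ ⟨x, rfl⟩
    rw [Dl_mul_apply]
    exact add_mem (Submodule.mem_sup_right ⟨Dl h x, ⟨x, rfl⟩, rfl⟩)
      (Submodule.mem_sup_left ⟨x, rfl⟩)
  calc rk (g * h) ≤ finrank ℚ ((LinearMap.range (Dl g) ⊔
        Submodule.map (plin g) (LinearMap.range (Dl h))) : Submodule ℚ (Fin n → ℚ)) :=
        Submodule.finrank_mono hle
    _ ≤ finrank ℚ (LinearMap.range (Dl g)) +
        finrank ℚ (Submodule.map (plin g) (LinearMap.range (Dl h))) :=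
        Submodule.finrank_add_le_finrank_add_finrank _ _
    _ = rk g + rk h := by
        rw [show plin g = ((plequiv g : (Fin n → ℚ) ≃ₗ[ℚ] (Fin n → ℚ)) :
          (Fin n → ℚ) →ₗ[ℚ] (Fin n → ℚ)) from rfl, LinearEquiv.finrank_map_eq]
        rfl

lemma rk_swap_le (t : Perm (Fin n)) (ht : t.IsSwap) : rk t ≤ 1 := by
  obtain ⟨i, j, hij, rfl⟩ := ht
  set v : Fin n → ℚ := Pi.single i 1 - Pi.single j 1 with hv
  have hle : LinearMap.range (Dl (Equiv.swap i j)) ≤ Submodule.span ℚ {v} := by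
    rintro _ ⟨x, rfl⟩
    have hx : Dl (Equiv.swap i j) x = (x j - x i) • v := by
      ext k
      rw [Dl_apply, Equiv.swap_inv]
      simp only [hv, Equiv.swap_apply_def, Pi.smul_apply, Pi.sub_apply,
        Pi.single_apply, smul_eq_mul]
      split_ifs <;> subst_vars <;> first | ring | simp_all | (exfalso; exact hij rfl)
    rw [hx]
    exact Submodule.smul_mem _ _ (Submodule.mem_span_singleton_self _)
  have hvne : v ≠ 0 := by
    intro h0
    have h2 := congrFun h0 i
    rw [hv] at h2
    simp only [Pi.sub_apply, Pi.single_eq_same, Pi.single_eq_of_ne hij,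
      Pi.zero_apply] at h2
    norm_num at h2
  have hv1 : finrank ℚ (Submodule.span ℚ {v}) ≤ 1 := le_of_eq (finrank_span_singleton hvne)
  exact le_trans (Submodule.finrank_mono hle) hv1

lemma rk_prod_le (l : List (Perm (Fin n))) (hl : ∀ t ∈ l, t.IsSwap) :
    rk l.prod ≤ l.length := by
  induction l with
  | nil => simp [rk_one]
  | cons t l ih =>
      rw [List.prod_cons, List.length_cons]
      calc rk (t * l.prod) ≤ rk t + rk l.prod := rk_mul_le _ _
        _ ≤ 1 + l.length := by
            have h1 := rk_swap_le t (hl t (List.mem_cons_self))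
            have h2 := ih (fun s hs => hl s (List.mem_cons_of_mem t hs))
            omega
        _ = l.length + 1 := by omega

lemma rk_swap_mul_lt (g : Perm (Fin n)) (a : Fin n) (ha : g a ≠ a) :
    rk (Equiv.swap a (g a) * g) < rk g := by
  set g' := Equiv.swap a (g a) * g with hg'
  have hle : LinearMap.ker (Dl g) ≤ LinearMap.ker (Dl g') := by
    intro f hf
    rw [mem_ker_Dl] at hf ⊢
    have hswap : ∀ j, f (Equiv.swap a (g a) j) = f j := by
      intro j
      rcases eq_or_ne j a with rfl | hja
      · rw [Equiv.swap_apply_left]; exact hf _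
      · rcases eq_or_ne j (g a) with rfl | hjga
        · rw [Equiv.swap_apply_right]; exact (hf _).symm
        · rw [Equiv.swap_apply_of_ne_of_ne hja hjga]
    intro i
    show f ((Equiv.swap a (g a) * g) i) = f i
    rw [Equiv.Perm.mul_apply, hswap]
    exact hf i
  have hfix : g' a = a := by
    show Equiv.swap a (g a) (g a) = a
    rw [Equiv.swap_apply_right]
  have hmem : (Pi.single a 1 : Fin n → ℚ) ∈ LinearMap.ker (Dl g') := by
    rw [mem_ker_Dl]
    intro i
    rcases eq_or_ne i a with rfl | hia
    · rw [hfix]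
    · have hne : g' i ≠ a := fun h => hia (g'.injective (h.trans hfix.symm))
      rw [Pi.single_eq_of_ne hne, Pi.single_eq_of_ne hia]
  have hnot : (Pi.single a 1 : Fin n → ℚ) ∉ LinearMap.ker (Dl g) := by
    rw [mem_ker_Dl]
    intro h
    have h2 := h a
    rw [Pi.single_eq_of_ne ha, Pi.single_eq_same] at h2
    exact zero_ne_one h2
  have hlt : finrank ℚ (LinearMap.ker (Dl g)) < finrank ℚ (LinearMap.ker (Dl g')) := by
    apply Submodule.finrank_lt_finrank_of_lt
    exact lt_of_le_of_ne hle (fun h => hnot (h ▸ hmem))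
  have h1 := rk_add_fix g
  have h2 := rk_add_fix g'
  omega

lemma exists_swaps (g : Perm (Fin n)) :
    ∃ l : List (Perm (Fin n)), (∀ t ∈ l, t.IsSwap) ∧ l.prod = g ∧ l.length ≤ rk g := by
  suffices H : ∀ k (g : Perm (Fin n)), g.support.card ≤ k →
      ∃ l : List (Perm (Fin n)), (∀ t ∈ l, t.IsSwap) ∧ l.prod = g ∧ l.length ≤ rk g from
    H g.support.card g le_rfl
  intro k
  induction k with
  | zero =>
      intro g hg
      have hg1 : g = 1 := by
        rw [← Equiv.Perm.support_eq_empty_iff, ← Finset.card_eq_zero]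
        omega
      exact ⟨[], by simp, by simp [hg1], by simp⟩
  | succ k ih =>
      intro g hg
      by_cases h1 : g = 1
      · exact ⟨[], by simp, by simp [h1], by simp⟩
      · have hex : ∃ a, g a ≠ a := by
          by_contra h
          push_neg at h
          exact h1 (Equiv.ext h)
        obtain ⟨a, ha⟩ := hex
        have hcard : (Equiv.swap a (g a) * g).support.card < g.support.card :=
          Equiv.Perm.card_support_swap_mul ha
        obtain ⟨l, hsw, hprod, hlen⟩ := ih (Equiv.swap a (g a) * g) (by omega)
        refine ⟨Equiv.swap a (g a) :: l, ?_, ?_, ?_⟩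
        · intro s hs
          rcases List.mem_cons.mp hs with rfl | hs'
          · exact ⟨a, g a, Ne.symm ha, rfl⟩
          · exact hsw s hs'
        · rw [List.prod_cons, hprod, ← mul_assoc, Equiv.swap_mul_self, one_mul]
        · have hlt := rk_swap_mul_lt g a ha
          rw [List.length_cons]
          omega

lemma scott (u v : Perm (Fin n)) :
    2 * finrank ℚ ((LinearMap.range (Dl u) ⊔ LinearMap.range (Dl v)) :
      Submodule ℚ (Fin n → ℚ)) ≤ rk u + rk v + rk (u * v) := by
  set A := LinearMap.range (Dl u) with hA
  set B := LinearMap.range (Dl v) with hB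
  set M := Submodule.map (plin u) B with hM
  have hW : A ⊔ M = A ⊔ B := by
    apply le_antisymm
    · apply sup_le le_sup_left
      rintro _ ⟨_, ⟨y, rfl⟩, rfl⟩
      have h2 : plin u (Dl v y) = Dl u (Dl v y) + Dl v y := by
        ext i
        simp only [plin_apply, Dl_apply, Pi.add_apply]
        ring
      rw [h2]
      exact add_mem (Submodule.mem_sup_left ⟨_, rfl⟩) (Submodule.mem_sup_right ⟨_, rfl⟩)
    · apply sup_le le_sup_left
      rintro _ ⟨y, rfl⟩
      have h2 : Dl v y = plin u (Dl v y) - Dl u (Dl v y) := by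
        ext i
        simp only [plin_apply, Dl_apply, Pi.sub_apply]
        ring
      rw [h2]
      exact sub_mem (Submodule.mem_sup_right ⟨_, ⟨y, rfl⟩, rfl⟩)
        (Submodule.mem_sup_left ⟨_, rfl⟩)
  set φ := (Dl u).domRestrict (LinearMap.ker (Dl (u * v))) with hφ
  have hrank : finrank ℚ (LinearMap.range φ) + finrank ℚ (LinearMap.ker φ)
      = finrank ℚ (LinearMap.ker (Dl (u * v))) :=
    LinearMap.finrank_range_add_finrank_ker φ
  have hrange : LinearMap.range φ ≤ A ⊓ M := by
    rintro _ ⟨⟨x, hx⟩, rfl⟩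
    have hx0 : Dl (u * v) x = 0 := hx
    refine Submodule.mem_inf.mpr ⟨⟨x, rfl⟩, ?_⟩
    refine ⟨-(Dl v x), neg_mem ⟨x, rfl⟩, ?_⟩
    have h2 : plin u (Dl v x) + Dl u x = 0 := by rw [← Dl_mul_apply, hx0]
    show plin u (-(Dl v x)) = φ ⟨x, hx⟩
    rw [map_neg]
    have : φ ⟨x, hx⟩ = Dl u x := rfl
    rw [this]
    linear_combination (norm := module) -h2
  have hker : finrank ℚ (LinearMap.ker φ) ≤
      finrank ℚ ((LinearMap.ker (Dl u) ⊓ LinearMap.ker (Dl v)) : Submodule ℚ (Fin n → ℚ)) := by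
    have hsub : Submodule.map (LinearMap.ker (Dl (u * v))).subtype (LinearMap.ker φ) ≤
        LinearMap.ker (Dl u) ⊓ LinearMap.ker (Dl v) := by
      rintro _ ⟨⟨x, hx⟩, hxk, rfl⟩
      have hu0 : Dl u x = 0 := hxk
      have hx0 : Dl (u * v) x = 0 := hx
      have hv0 : Dl v x = 0 := by
        apply plin_inj u
        rw [map_zero]
        have h2 := Dl_mul_apply u v x
        rw [hx0, hu0, add_zero] at h2
        exact h2.symm
      exact Submodule.mem_inf.mpr ⟨LinearMap.mem_ker.mpr hu0, LinearMap.mem_ker.mpr hv0⟩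
    calc finrank ℚ (LinearMap.ker φ)
        = finrank ℚ (Submodule.map (LinearMap.ker (Dl (u * v))).subtype (LinearMap.ker φ)) :=
          (Submodule.finrank_map_subtype_eq _ _).symm
      _ ≤ _ := Submodule.finrank_mono hsub
  have hinf : finrank ℚ ((A ⊔ B) : Submodule ℚ (Fin n → ℚ))
      + finrank ℚ ((A ⊓ M) : Submodule ℚ (Fin n → ℚ)) = rk u + rk v := by
    have h2 := Submodule.finrank_sup_add_finrank_inf_eq A M
    rw [hW] at h2
    rw [h2]
    congr 1
    rw [hM, show plin u = ((plequiv u : (Fin n → ℚ) ≃ₗ[ℚ] (Fin n → ℚ)) :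
      (Fin n → ℚ) →ₗ[ℚ] (Fin n → ℚ)) from rfl, LinearEquiv.finrank_map_eq]
    rfl
  have hKW : finrank ℚ ((LinearMap.ker (Dl u) ⊓ LinearMap.ker (Dl v)) : Submodule ℚ (Fin n → ℚ))
      + finrank ℚ ((A ⊔ B) : Submodule ℚ (Fin n → ℚ)) ≤ n := by
    set K := LinearMap.ker (Dl u) ⊓ LinearMap.ker (Dl v) with hK
    have hdisj : K ⊓ (A ⊔ B) = ⊥ := by
      rw [eq_bot_iff]
      rintro z ⟨hzK, hzW⟩
      obtain ⟨za, hza, zb, hzb, hzab⟩ := Submodule.mem_sup.mp hzW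
      obtain ⟨x, rfl⟩ := hza
      obtain ⟨y, rfl⟩ := hzb
      have hzu : ∀ i, z (u i) = z i := mem_ker_Dl.mp hzK.1
      have hzv : ∀ i, z (v i) = z i := mem_ker_Dl.mp hzK.2
      have key : ∀ (w : Perm (Fin n)) (x : Fin n → ℚ), (∀ i, z (w i) = z i) →
          ∑ i, (Dl w x i) * z i = 0 := by
        intro w x hz
        have hre : ∑ i, x (w⁻¹ i) * z i = ∑ i, x i * z i := by
          rw [← Equiv.sum_comp w (fun i => x (w⁻¹ i) * z i)]
          refine Finset.sum_congr rfl (fun j _ => ?_)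
          rw [Equiv.Perm.inv_apply_self, hz j]
        simp only [Dl_apply, sub_mul]
        rw [Finset.sum_sub_distrib, hre, sub_self]
      have hzz : ∑ i, z i * z i = 0 := by
        have hsplit : ∀ i, z i * z i = (Dl u x i) * z i + (Dl v y i) * z i := by
          intro i
          have : z i = Dl u x i + Dl v y i := by rw [← hzab]; rfl
          rw [this]; ring
        calc ∑ i, z i * z i = ∑ i, ((Dl u x i) * z i + (Dl v y i) * z i) :=
              Finset.sum_congr rfl (fun i _ => hsplit i)
          _ = (∑ i, (Dl u x i) * z i) + ∑ i, (Dl v y i) * z i := Finset.sum_add_distrib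
          _ = 0 := by rw [key u x hzu, key v y hzv, add_zero]
      have hall := (Finset.sum_eq_zero_iff_of_nonneg
        (fun i _ => mul_self_nonneg (z i))).mp hzz
      rw [Submodule.mem_bot]
      funext i
      exact mul_self_eq_zero.mp (hall i (Finset.mem_univ i))
    have h2 := Submodule.finrank_sup_add_finrank_inf_eq K (A ⊔ B)
    rw [hdisj, finrank_bot, add_zero] at h2
    rw [← h2]
    have h3 := Submodule.finrank_le (K ⊔ (A ⊔ B) : Submodule ℚ (Fin n → ℚ))
    rwa [Module.finrank_fin_fun] at h3
  have hr1 := rk_add_fix (u * v)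
  have hrange' : finrank ℚ (LinearMap.range φ) ≤
      finrank ℚ ((A ⊓ M) : Submodule ℚ (Fin n → ℚ)) := Submodule.finrank_mono hrange
  omega

lemma range_Dl_le (u d : Perm (Fin n)) :
    LinearMap.range (Dl (u⁻¹ * d)) ≤ LinearMap.range (Dl u) ⊔ LinearMap.range (Dl d) := by
  rintro _ ⟨x, rfl⟩
  have hDu : ∀ z : Fin n → ℚ, Dl u⁻¹ z = Dl u (-(plin u⁻¹ z)) := by
    intro z
    ext i
    simp only [Dl_apply, plin_apply, Pi.neg_apply, inv_inv, Equiv.Perm.apply_inv_self]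
    ring
  have hid : Dl (u⁻¹ * d) x = Dl d x + Dl u⁻¹ (Dl d x) + Dl u⁻¹ x := by
    ext i
    simp only [Dl_apply, Pi.add_apply, mul_inv_rev, inv_inv, Equiv.Perm.mul_apply]
    ring
  rw [hid]
  refine add_mem (add_mem (Submodule.mem_sup_right ⟨x, rfl⟩) ?_) ?_
  · rw [hDu]; exact Submodule.mem_sup_left ⟨_, rfl⟩
  · rw [hDu]; exact Submodule.mem_sup_left ⟨_, rfl⟩

lemma rk_key (c P : Perm (Fin n)) (h : rk c + rk (c⁻¹ * P) = rk P) :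
    rk (c⁻¹ * (c⁻¹ * P)) = rk P := by
  have hup : rk (c⁻¹ * (c⁻¹ * P)) ≤ rk P := by
    calc rk (c⁻¹ * (c⁻¹ * P)) ≤ rk c⁻¹ + rk (c⁻¹ * P) := rk_mul_le _ _
      _ = rk P := by rw [rk_inv]; exact h
  have hs := scott c⁻¹ (c⁻¹ * P)
  rw [rk_inv] at hs
  have hPW : rk P ≤ finrank ℚ ((LinearMap.range (Dl c⁻¹) ⊔ LinearMap.range (Dl (c⁻¹ * P))) :
      Submodule ℚ (Fin n → ℚ)) := by
    apply Submodule.finrank_mono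
    have h2 := range_Dl_le c⁻¹ (c⁻¹ * P)
    rwa [show (c⁻¹)⁻¹ * (c⁻¹ * P) = P by group] at h2
  omega

lemma trdist_eq_rk (a b : Perm (Fin n)) : trdist a b = rk (a⁻¹ * b) := by
  obtain ⟨l, hsw, hprod, hlen⟩ := exists_swaps (a⁻¹ * b)
  have hmem : l.length ∈ {k | ∃ l : List (Perm (Fin n)),
      l.length = k ∧ (∀ t ∈ l, t.IsSwap) ∧ l.prod = a⁻¹ * b} := ⟨l, rfl, hsw, hprod⟩
  apply le_antisymm
  · exact le_trans (Nat.sInf_le hmem) hlen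
  · obtain ⟨l', hl', hsw', hprod'⟩ := Nat.sInf_mem (⟨l.length, hmem⟩ : Set.Nonempty _)
    calc rk (a⁻¹ * b) = rk l'.prod := by rw [hprod']
      _ ≤ l'.length := rk_prod_le l' hsw'
      _ = _ := hl'

end Stmt13Aux


theorem stmt13 (n : ℕ) (a b u c P x y : Equiv.Perm (Fin n))
    (hP : P = canonPerm n (orderedCycleType (a⁻¹ * b)) 0)
    (hu : IsConjugator P (a⁻¹ * b) u) (hc : c ∈ midpts 1 P)
    (hx : x = a * u * c * u⁻¹) (hy : y = a * u * (c⁻¹ * P) * u⁻¹) :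
    a ∈ midpts x y ∧ b ∈ midpts x y := by
  classical
  open Stmt13Aux in
  simp only [midpts, Set.mem_setOf_eq] at hc ⊢
  obtain ⟨hc1, hc2⟩ := hc
  simp only [Stmt13Aux.trdist_eq_rk, inv_one, one_mul] at hc1 hc2
  have hkey := Stmt13Aux.rk_key c P hc1
  have hb : a⁻¹ * b = u * P * u⁻¹ := hu.1.symm
  have hxa : x⁻¹ * a = u * c⁻¹ * u⁻¹ := by rw [hx]; group
  have hay : a⁻¹ * y = u * (c⁻¹ * P) * u⁻¹ := by rw [hy]; group
  have hxy : x⁻¹ * y = u * (c⁻¹ * (c⁻¹ * P)) * u⁻¹ := by rw [hx, hy]; group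
  have hxb : x⁻¹ * b = u * (c⁻¹ * P) * u⁻¹ := by
    have h2 : x⁻¹ * b = (u * c⁻¹ * u⁻¹) * (a⁻¹ * b) := by rw [hx]; group
    rw [h2, hb]; group
  have hby : b⁻¹ * y = u * (P⁻¹ * c⁻¹ * P) * u⁻¹ := by
    have h2 : b⁻¹ * y = (a⁻¹ * b)⁻¹ * (a⁻¹ * y) := by group
    rw [h2, hb, hay]; group
  have ra1 : Stmt13Aux.rk (u * c⁻¹ * u⁻¹) = Stmt13Aux.rk c := by
    rw [Stmt13Aux.rk_conj, Stmt13Aux.rk_inv]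
  have rxy : Stmt13Aux.rk (u * (c⁻¹ * (c⁻¹ * P)) * u⁻¹) = Stmt13Aux.rk P := by
    rw [Stmt13Aux.rk_conj]; exact hkey
  have rd : Stmt13Aux.rk (u * (c⁻¹ * P) * u⁻¹) = Stmt13Aux.rk (c⁻¹ * P) :=
    Stmt13Aux.rk_conj _ _
  have rby : Stmt13Aux.rk (u * (P⁻¹ * c⁻¹ * P) * u⁻¹) = Stmt13Aux.rk c := by
    rw [Stmt13Aux.rk_conj, show P⁻¹ * c⁻¹ * P = P⁻¹ * c⁻¹ * P⁻¹⁻¹ by rw [inv_inv],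
      Stmt13Aux.rk_conj, Stmt13Aux.rk_inv]
  refine ⟨⟨?_, ?_⟩, ?_, ?_⟩
  · rw [Stmt13Aux.trdist_eq_rk, Stmt13Aux.trdist_eq_rk, Stmt13Aux.trdist_eq_rk,
      hxa, hay, hxy, ra1, rd, rxy]
    exact hc1
  · rw [Stmt13Aux.trdist_eq_rk, Stmt13Aux.trdist_eq_rk, hxa, hay, ra1, rd]
    exact hc2
  · rw [Stmt13Aux.trdist_eq_rk, Stmt13Aux.trdist_eq_rk, Stmt13Aux.trdist_eq_rk,
      hxb, hby, hxy, rd, rby, rxy]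
    omega
  · rw [Stmt13Aux.trdist_eq_rk, Stmt13Aux.trdist_eq_rk, hxb, hby, rd, rby]
    rw [abs_sub_comm] at hc2
    exact hc2
end

section
/- With notation as above, if (x,y) = Phi_c(a,b) = (phi_c(a,b), phi_{c^∨}(a,b)), then u_{x^{-1}y} = u_{a^{-1}b} · u_{c^{-1}c^∨}, where u_{c^{-1}c^∨} is the unique permutation conjugating p_mu to c^{-1}c^∨ and matching cycle minima. -/
open Equiv

section StmtAux

open Equiv Equiv.Perm List

variable {n : ℕ}

/-- Leader set of a relation: elements minimal in their class. -/
noncomputable def ldrs {n : ℕ} (R : Fin n → Fin n → Prop) : Finset (Fin n) :=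
  @Finset.filter _ (fun i => ∀ j, R i j → i ≤ j) (Classical.decPred _) Finset.univ

lemma mem_ldrs {R : Fin n → Fin n → Prop} {m : Fin n} :
    m ∈ ldrs R ↔ ∀ j, R m j → m ≤ j := by
  simp [ldrs, Finset.mem_filter]

lemma cycleCount_eq_card (p : Perm (Fin n)) : cycleCount p = (ldrs p.SameCycle).card := by
  rw [cycleCount, cycleMins, Finset.length_sort]; rfl

lemma mem_cycleMins {p : Perm (Fin n)} {m : Fin n} :
    m ∈ cycleMins p ↔ ∀ j, p.SameCycle m j → m ≤ j := by
  simp [cycleMins, Finset.mem_sort, Finset.mem_filter]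

lemma cycleMins_congr {p q : Perm (Fin n)} (h : ∀ i j, p.SameCycle i j ↔ q.SameCycle i j) :
    cycleMins p = cycleMins q := by
  unfold cycleMins
  congr 1
  ext i
  simp only [Finset.mem_filter, Finset.mem_univ, true_and]
  constructor
  · intro hi j hj; exact hi j ((h i j).mpr hj)
  · intro hi j hj; exact hi j ((h i j).mp hj)

lemma exists_cycleMin (g : Perm (Fin n)) (i : Fin n) :
    ∃ m, (∀ j, g.SameCycle m j → m ≤ j) ∧ g.SameCycle m i := by
  classical
  set O : Finset (Fin n) := Finset.univ.filter (fun j => g.SameCycle i j) with hO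
  have hne : O.Nonempty := ⟨i, Finset.mem_filter.mpr ⟨Finset.mem_univ _, Equiv.Perm.SameCycle.refl _ _⟩⟩
  have hmem : g.SameCycle i (O.min' hne) := (Finset.mem_filter.mp (O.min'_mem hne)).2
  refine ⟨O.min' hne, ?_, hmem.symm⟩
  intro j hj
  exact O.min'_le j (Finset.mem_filter.mpr ⟨Finset.mem_univ _, hmem.trans hj⟩)

lemma map_eq_map {α β : Type*} {f g : α → β} {L : List α} (h : L.map f = L.map g) :
    ∀ x ∈ L, f x = g x := by
  induction L with
  | nil => simp
  | cons a L ih =>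
    simp only [List.map_cons, List.cons.injEq] at h
    intro x hx
    rcases List.mem_cons.mp hx with rfl | hx
    · exact h.1
    · exact ih h.2 x hx

/-- Connectivity relation generated by a list of permutations. -/
def SRel {n : ℕ} (l : List (Equiv.Perm (Fin n))) : Fin n → Fin n → Prop :=
  Relation.ReflTransGen (fun i j => ∃ t ∈ l, t i = j)

lemma srel_refl {l : List (Perm (Fin n))} (i : Fin n) : SRel l i i :=
  Relation.ReflTransGen.refl

lemma srel_symm {l : List (Perm (Fin n))} (hl : ∀ t ∈ l, t.IsSwap) {i j : Fin n}
    (h : SRel l i j) : SRel l j i := by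
  refine @Std.Symm.symm _ _ (@Relation.ReflTransGen.symmetric _ _ ⟨?_⟩) _ _ h
  rintro u v ⟨t, ht, rfl⟩
  obtain ⟨x, y, -, rfl⟩ := hl t ht
  exact ⟨Equiv.swap x y, ht, Equiv.swap_apply_self _ _ _⟩

lemma srel_trans {l : List (Perm (Fin n))} {i j k : Fin n}
    (h : SRel l i j) (h' : SRel l j k) : SRel l i k := h.trans h'

lemma srel_mono {l l' : List (Perm (Fin n))} (hsub : ∀ t ∈ l, t ∈ l') {i j : Fin n}
    (h : SRel l i j) : SRel l' i j := by
  refine Relation.ReflTransGen.mono ?_ _ _ h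
  rintro u v ⟨t, ht, rfl⟩
  exact ⟨t, hsub t ht, rfl⟩

lemma srel_prod (l : List (Perm (Fin n))) (i : Fin n) : SRel l i (l.prod i) := by
  induction l generalizing i with
  | nil => simpa using srel_refl i
  | cons t l ih =>
    have h1 : SRel (t :: l) i (l.prod i) :=
      srel_mono (fun s hs => List.mem_cons_of_mem _ hs) (ih i)
    have h2 : (t :: l).prod i = t (l.prod i) := by
      rw [List.prod_cons, Equiv.Perm.mul_apply]
    rw [h2]
    exact h1.tail ⟨t, List.mem_cons_self, rfl⟩

/-- If `R` contains all single applications of `g`, is refl/symm/trans, then it contains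
`g.SameCycle`. -/
lemma sameCycle_subset_rel {g : Perm (Fin n)} {R : Fin n → Fin n → Prop}
    (hrefl : ∀ i, R i i) (hsymm : ∀ {i j}, R i j → R j i)
    (htrans : ∀ {i j k}, R i j → R j k → R i k)
    (hstep : ∀ i, R i (g i)) : ∀ i j, g.SameCycle i j → R i j := by
  have hpow : ∀ (k : ℕ) (i : Fin n), R i ((g ^ k) i) := by
    intro k
    induction k with
    | zero => intro i; simpa using hrefl i
    | succ k ih =>
      intro i
      have h1 : (g ^ (k + 1)) i = (g ^ k) (g i) := by
        rw [pow_succ, Equiv.Perm.mul_apply]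
      rw [h1]
      exact htrans (hstep i) (ih (g i))
  rintro i j ⟨k, rfl⟩
  match k with
  | Int.ofNat m =>
    have : (g ^ (Int.ofNat m)) i = (g ^ m) i := by
      rw [Int.ofNat_eq_coe, zpow_natCast]
    rw [this]; exact hpow m i
  | Int.negSucc m =>
    have h1 : (g ^ (Int.negSucc m)) i = (g ^ (m + 1))⁻¹ i := by rw [zpow_negSucc]
    rw [h1]
    have h2 := hpow (m + 1) ((g ^ (m + 1))⁻¹ i)
    rw [show (g ^ (m + 1)) ((g ^ (m + 1))⁻¹ i) = i from (g ^ (m + 1)).apply_symm_apply i] at h2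
    exact hsymm h2

lemma srel_cons_cases {l : List (Perm (Fin n))} (hl : ∀ t ∈ l, t.IsSwap)
    {x y : Fin n} {i j : Fin n} (h : SRel (Equiv.swap x y :: l) i j) :
    SRel l i j ∨ ((SRel l i x ∨ SRel l i y) ∧ (SRel l j x ∨ SRel l j y)) := by
  induction h with
  | refl => exact Or.inl (srel_refl i)
  | @tail b c hab hstep ih =>
    obtain ⟨t, ht, rfl⟩ := hstep
    rcases List.mem_cons.mp ht with rfl | ht
    · -- t = swap x y
      by_cases hbx : b = x
      · subst hbx
        have hc : Equiv.swap b y b = y := Equiv.swap_apply_left _ _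
        rw [hc]
        right
        constructor
        · rcases ih with h1 | ⟨h1, -⟩
          · exact Or.inl h1
          · exact h1
        · exact Or.inr (srel_refl y)
      · by_cases hby : b = y
        · subst hby
          have hc : Equiv.swap x b b = x := Equiv.swap_apply_right _ _
          rw [hc]
          right
          constructor
          · rcases ih with h1 | ⟨h1, -⟩
            · exact Or.inr h1
            · exact h1
          · exact Or.inl (srel_refl x)
        · have hc : Equiv.swap x y b = b := Equiv.swap_apply_of_ne_of_ne hbx hby
          rw [hc]
          exact ih
    · -- t ∈ l
      have hstep' : SRel l b (t b) := Relation.ReflTransGen.single ⟨t, ht, rfl⟩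
      rcases ih with h1 | ⟨h1, h2⟩
      · exact Or.inl (h1.trans hstep')
      · refine Or.inr ⟨h1, ?_⟩
        rcases h2 with h2 | h2
        · exact Or.inl ((srel_symm hl hstep').trans h2)
        · exact Or.inr ((srel_symm hl hstep').trans h2)

lemma card_ldrs_srel (l : List (Perm (Fin n))) (hl : ∀ t ∈ l, t.IsSwap) :
    n ≤ (ldrs (SRel l)).card + l.length := by
  induction l with
  | nil =>
    have : ldrs (SRel ([] : List (Perm (Fin n)))) = Finset.univ := by
      apply Finset.eq_univ_of_forall
      intro i
      rw [mem_ldrs]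
      intro j hj
      have : i = j := by
        induction hj with
        | refl => rfl
        | tail _ hstep _ => exact absurd hstep.choose_spec.1 List.not_mem_nil
      exact this.le
    simp [this]
  | cons t l ih =>
    classical
    have hl' : ∀ s ∈ l, s.IsSwap := fun s hs => hl s (List.mem_cons_of_mem _ hs)
    obtain ⟨x, y, hxy, rfl⟩ := hl t (List.mem_cons_self)
    have hsub : ldrs (SRel (Equiv.swap x y :: l)) ⊆ ldrs (SRel l) := by
      intro i hi
      rw [mem_ldrs] at hi ⊢
      intro j hj
      exact hi j (srel_mono (fun s hs => List.mem_cons_of_mem _ hs) hj)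
    -- each bad leader gets data
    have hbad : ∀ i ∈ ldrs (SRel l) \ ldrs (SRel (Equiv.swap x y :: l)),
        (∀ j, SRel l i j → i ≤ j) ∧ (SRel l i x ∨ SRel l i y) ∧
          ∃ j, j < i ∧ (SRel l j x ∨ SRel l j y) := by
      intro i hi
      rw [Finset.mem_sdiff, mem_ldrs, mem_ldrs] at hi
      obtain ⟨hld, hnl⟩ := hi
      push_neg at hnl
      obtain ⟨j, hj, hji⟩ := hnl
      rcases srel_cons_cases hl' hj with h1 | ⟨h1, h2⟩
      · exact absurd (hld j h1) (not_le.mpr hji)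
      · exact ⟨hld, h1, j, hji, h2⟩
    have haux : ∀ (i₁ i₂ : Fin n) (xx yy : Fin n),
        (∀ j, SRel l i₁ j → i₁ ≤ j) → (∀ j, SRel l i₂ j → i₂ ≤ j) →
        SRel l i₁ xx → SRel l i₂ yy →
        (∃ j, j < i₁ ∧ (SRel l j xx ∨ SRel l j yy)) → i₂ < i₁ := by
      intro i₁ i₂ xx yy h₁ h₂ hx1 hy2 ⟨j, hji, hj⟩
      rcases hj with hj | hj
      · exact absurd (h₁ j (hx1.trans (srel_symm hl' hj))) (not_le.mpr hji)
      · exact lt_of_le_of_lt (h₂ j (hy2.trans (srel_symm hl' hj))) hji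
    have hcard1 : (ldrs (SRel l) \ ldrs (SRel (Equiv.swap x y :: l))).card ≤ 1 := by
      rw [Finset.card_le_one]
      intro i₁ hi₁ i₂ hi₂
      by_contra hne
      obtain ⟨hld₁, hxy₁, hw₁⟩ := hbad i₁ hi₁
      obtain ⟨hld₂, hxy₂, hw₂⟩ := hbad i₂ hi₂
      have same : ∀ z, SRel l i₁ z → SRel l i₂ z → False := by
        intro z h1 h2
        have h12 : SRel l i₁ i₂ := h1.trans (srel_symm hl' h2)
        exact hne (le_antisymm (hld₁ _ h12) (hld₂ _ (srel_symm hl' h12)))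
      rcases hxy₁ with h1 | h1 <;> rcases hxy₂ with h2 | h2
      · exact same _ h1 h2
      · exact absurd (haux i₂ i₁ y x hld₂ hld₁ h2 h1 (hw₂.imp (fun j hj => ⟨hj.1, hj.2.symm⟩)))
          (not_lt.mpr (haux i₁ i₂ x y hld₁ hld₂ h1 h2 hw₁).le)
      · exact absurd (haux i₂ i₁ x y hld₂ hld₁ h2 h1 hw₂)
          (not_lt.mpr (haux i₁ i₂ y x hld₁ hld₂ h1 h2 (hw₁.imp (fun j hj => ⟨hj.1, hj.2.symm⟩))).le)
      · exact same _ h1 h2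
    have heq := Finset.card_sdiff_add_card_eq_card hsub
    have := ih hl'
    simp only [List.length_cons]
    omega

/-- If `R` is symmetric/transitive, coarser than `SameCycle g`, with at least as many
leaders, then it equals `SameCycle g`. -/
lemma rel_eq_sameCycle {g : Perm (Fin n)} {R : Fin n → Fin n → Prop}
    (hsymm : ∀ {i j}, R i j → R j i)
    (htrans : ∀ {i j k}, R i j → R j k → R i k)
    (hsub : ∀ i j, g.SameCycle i j → R i j)
    (hcard : (ldrs g.SameCycle).card ≤ (ldrs R).card) :
    ∀ i j, R i j ↔ g.SameCycle i j := by
  have hsubset : ldrs R ⊆ ldrs g.SameCycle := by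
    intro i hi
    rw [mem_ldrs] at hi ⊢
    intro j hj
    exact hi j (hsub i j hj)
  have heq : ldrs R = ldrs g.SameCycle := Finset.eq_of_subset_of_card_le hsubset hcard
  intro i j
  refine ⟨fun hij => ?_, hsub i j⟩
  obtain ⟨m₁, hm₁, hm₁i⟩ := exists_cycleMin g i
  obtain ⟨m₂, hm₂, hm₂j⟩ := exists_cycleMin g j
  have hm₁R : m₁ ∈ ldrs R := heq ▸ mem_ldrs.mpr hm₁
  have hm₂R : m₂ ∈ ldrs R := heq ▸ mem_ldrs.mpr hm₂
  have h12 : R m₁ m₂ :=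
    htrans (htrans (hsub _ _ hm₁i) hij) (hsymm (hsub _ _ hm₂j))
  have e : m₁ = m₂ :=
    le_antisymm (mem_ldrs.mp hm₁R _ h12) (mem_ldrs.mp hm₂R _ (hsymm h12))
  exact (hm₁i.symm.trans (e ▸ hm₂j))

lemma exists_swap_list_formPerm (L : List (Fin n)) (hL : L.Nodup) :
    ∃ l : List (Equiv.Perm (Fin n)), (∀ t ∈ l, t.IsSwap) ∧ l.prod = L.formPerm ∧
      l.length = L.length - 1 := by
  induction L with
  | nil => exact ⟨[], by simp, by simp [List.formPerm_nil], rfl⟩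
  | cons x L ih =>
    match L with
    | [] => exact ⟨[], by simp, by simp [List.formPerm_singleton], rfl⟩
    | y :: L' =>
      obtain ⟨l, hsw, hprod, hlen⟩ := ih (List.nodup_cons.mp hL).2
      have hxy : x ≠ y := by
        have := (List.nodup_cons.mp hL).1
        intro h; exact this (h ▸ List.mem_cons_self)
      refine ⟨Equiv.swap x y :: l, ?_, ?_, ?_⟩
      · intro t ht
        rcases List.mem_cons.mp ht with rfl | ht
        · exact ⟨x, y, hxy, rfl⟩
        · exact hsw t ht
      · rw [List.prod_cons, hprod, List.formPerm_cons_cons]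
      · simp [hlen]

lemma card_filter_interval_le (off m : ℕ) :
    ((Finset.univ : Finset (Fin n)).filter (fun i => off ≤ i.val ∧ i.val < off + m)).card ≤ m := by
  classical
  have h1 : ((Finset.univ : Finset (Fin n)).filter
      (fun i => off ≤ i.val ∧ i.val < off + m)).card ≤ (Finset.Ico off (off + m)).card := by
    apply Finset.card_le_card_of_injOn Fin.val
    · intro i hi
      rw [Finset.mem_coe, Finset.mem_filter] at hi
      rw [Finset.mem_coe, Finset.mem_Ico]
      exact hi.2
    · exact Fin.val_injective.injOn
  rwa [Nat.card_Ico, Nat.add_sub_cancel_left] at h1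

lemma canonPerm_factors (ms : List ℕ) (hms : ∀ m ∈ ms, 1 ≤ m) (off : ℕ) :
    ∃ l : List (Equiv.Perm (Fin n)), (∀ t ∈ l, t.IsSwap) ∧ l.prod = canonPerm n ms off ∧
      l.length + ms.length ≤ ms.sum := by
  induction ms generalizing off with
  | nil => exact ⟨[], by simp, by simp [canonPerm], by simp⟩
  | cons m rest ih =>
    obtain ⟨lr, hswr, hprodr, hlenr⟩ := ih (fun m hm => hms m (List.mem_cons_of_mem _ hm)) (off + m)
    set s := (Finset.univ : Finset (Fin n)).filter (fun i => off ≤ i.val ∧ i.val < off + m) with hs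
    obtain ⟨ls, hsws, hprods, hlens⟩ := exists_swap_list_formPerm (s.sort (· ≤ ·)) (s.sort_nodup _)
    refine ⟨ls ++ lr, ?_, ?_, ?_⟩
    · intro t ht
      rcases List.mem_append.mp ht with ht | ht
      · exact hsws t ht
      · exact hswr t ht
    · rw [List.prod_append, hprods, hprodr]
      rfl
    · have hcard : s.card ≤ m := card_filter_interval_le off m
      have hm1 : 1 ≤ m := hms m (List.mem_cons_self)
      have hlens' : ls.length = s.card - 1 := by
        rw [hlens, Finset.length_sort]
      simp only [List.length_append, List.length_cons, List.sum_cons]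
      omega

lemma sum_orderedCycleType (g : Perm (Fin n)) :
    (orderedCycleType g).sum = n := by
  classical
  choose f hf1 hf2 using exists_cycleMin g
  have hfM : ∀ i, f i ∈ ldrs g.SameCycle := fun i => mem_ldrs.mpr (hf1 i)
  have hcard := Finset.card_eq_sum_card_fiberwise
    (fun i (_ : i ∈ (Finset.univ : Finset (Fin n))) => hfM i)
  have hfib : ∀ m ∈ ldrs g.SameCycle,
      (Finset.univ.filter (fun i => f i = m)).card =
        (@Finset.filter _ (fun j => g.SameCycle m j) (Classical.decPred _) Finset.univ).card := by
    intro m hm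
    congr 1
    ext i
    simp only [Finset.mem_filter, Finset.mem_univ, true_and]
    constructor
    · rintro rfl
      exact hf2 i
    · intro hmi
      have h1 : m ≤ f i := mem_ldrs.mp hm _ (hmi.trans (hf2 i).symm)
      have h2 : f i ≤ m := hf1 i _ ((hf2 i).trans hmi.symm)
      exact le_antisymm h2 h1
  have hsum : (orderedCycleType g).sum =
      ∑ m ∈ ldrs g.SameCycle,
        (@Finset.filter _ (fun j => g.SameCycle m j) (Classical.decPred _) Finset.univ).card := by
    rw [orderedCycleType]
    have hmins : cycleMins g = (ldrs g.SameCycle).sort (· ≤ ·) := rfl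
    rw [hmins]
    have hperm : ((ldrs g.SameCycle).sort (· ≤ ·)).map
        (fun i => (@Finset.filter _ (fun j => g.SameCycle i j) (Classical.decPred _)
          Finset.univ).card) ~ ((ldrs g.SameCycle).toList).map
        (fun i => (@Finset.filter _ (fun j => g.SameCycle i j) (Classical.decPred _)
          Finset.univ).card) :=
      ((ldrs g.SameCycle).sort_perm_toList (· ≤ ·)).map _
    rw [hperm.sum_eq]
    exact Finset.sum_map_toList _ _
  rw [hsum, ← Finset.sum_congr rfl hfib, ← hcard, Finset.card_univ, Fintype.card_fin]

lemma trdist_spec (a b : Perm (Fin n)) :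
    ∃ l : List (Perm (Fin n)), l.length = trdist a b ∧ (∀ t ∈ l, t.IsSwap) ∧
      l.prod = a⁻¹ * b := by
  have hne : {k | ∃ l : List (Perm (Fin n)), l.length = k ∧ (∀ t ∈ l, t.IsSwap) ∧
      l.prod = a⁻¹ * b}.Nonempty := by
    obtain ⟨l, hprod, hsw⟩ := (Equiv.Perm.truncSwapFactors (a⁻¹ * b)).out
    exact ⟨l.length, l, rfl, hsw, hprod⟩
  exact Nat.sInf_mem hne

end StmtAux

theorem stmt14 (n : ℕ) (a b u u' w c P x y : Equiv.Perm (Fin n))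
    (hP : P = canonPerm n (orderedCycleType (a⁻¹ * b)) 0)
    (hu : IsConjugator P (a⁻¹ * b) u) (hc : c ∈ midpts 1 P)
    (hx : x = a * u * c * u⁻¹) (hy : y = a * u * (c⁻¹ * P) * u⁻¹)
    (hu' : IsConjugator P (c⁻¹ * (c⁻¹ * P)) u')
    (hw : IsConjugator P (x⁻¹ * y) w) :
    w = u * u' := by
  classical
  obtain ⟨hcmid, -⟩ := hc
  set r := a⁻¹ * b with hr
  set q := c⁻¹ * (c⁻¹ * P) with hq
  -- minimal factorizations from the midpoint condition
  obtain ⟨l1, hlen1, hsw1, hprod1⟩ := trdist_spec (1 : Equiv.Perm (Fin n)) c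
  obtain ⟨l2, hlen2, hsw2, hprod2⟩ := trdist_spec c P
  have hprod1' : l1.prod = c := by rw [hprod1, inv_one, one_mul]
  set l := l1 ++ l2 with hl
  have hsw : ∀ t ∈ l, t.IsSwap := by
    intro t ht
    rcases List.mem_append.mp ht with ht | ht
    · exact hsw1 t ht
    · exact hsw2 t ht
  have hprodl : l.prod = P := by
    rw [hl, List.prod_append, hprod1', hprod2]; group
  have hlenl : l.length = trdist 1 P := by
    rw [hl, List.length_append, hlen1, hlen2, hcmid]
  -- upper bound for trdist 1 P via the canonical factorization
  have hsum : (orderedCycleType r).sum = n := sum_orderedCycleType r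
  have hpos : ∀ m ∈ orderedCycleType r, 1 ≤ m := by
    intro m hm
    rw [orderedCycleType, List.mem_map] at hm
    obtain ⟨i, hi, rfl⟩ := hm
    have hmem : i ∈ @Finset.filter _ (fun j => r.SameCycle i j) (Classical.decPred _)
        Finset.univ := by
      rw [Finset.filter_congr_decidable, Finset.mem_filter]
      exact ⟨Finset.mem_univ _, Equiv.Perm.SameCycle.refl _ _⟩
    exact Nat.succ_le_of_lt (Finset.card_pos.mpr ⟨i, hmem⟩)
  obtain ⟨lP, hswP, hprodP, hlenP⟩ := canonPerm_factors (orderedCycleType r) hpos 0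
  have hPle : trdist 1 P + (orderedCycleType r).length ≤ n := by
    have h1 : trdist 1 P ≤ lP.length :=
      Nat.sInf_le ⟨lP, rfl, hswP, by rw [hprodP, ← hP, inv_one, one_mul]⟩
    omega
  -- number of cycles of P
  have hlenmu : (orderedCycleType r).length = (ldrs P.SameCycle).card := by
    rw [orderedCycleType, List.length_map, ← hu.2, List.length_map]
    exact cycleCount_eq_card P
  -- counting: SRel l has at least cycleCount P classes
  have hcount := card_ldrs_srel l hsw
  have hcardle : (ldrs P.SameCycle).card ≤ (ldrs (SRel l)).card := by omega
  -- SRel l coincides with the cycles of P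
  have hPstep : ∀ i, SRel l i (P i) := by
    intro i
    have h := srel_prod l i
    rwa [hprodl] at h
  have hPsub : ∀ i j, P.SameCycle i j → SRel l i j :=
    sameCycle_subset_rel (fun i => srel_refl i) (fun {i j} h => srel_symm hsw h)
      (fun {i j k} h h' => srel_trans h h') hPstep
  have hSrel : ∀ i j, SRel l i j ↔ P.SameCycle i j :=
    rel_eq_sameCycle (fun {i j} h => srel_symm hsw h)
      (fun {i j k} h h' => srel_trans h h') hPsub hcardle
  -- cycles of q refine those of P
  have hcstep : ∀ i, SRel l i (c i) := by
    intro i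
    have h := srel_prod l1 i
    rw [hprod1'] at h
    exact srel_mono (fun t ht => List.mem_append_left _ ht) h
  have hcsub : ∀ i j, c.SameCycle i j → SRel l i j :=
    sameCycle_subset_rel (fun i => srel_refl i) (fun {i j} h => srel_symm hsw h)
      (fun {i j k} h h' => srel_trans h h') hcstep
  have hc2step : ∀ i, SRel l i ((c⁻¹ * P) i) := by
    intro i
    have h := srel_prod l2 i
    rw [hprod2] at h
    exact srel_mono (fun t ht => List.mem_append_right _ ht) h
  have hqstep : ∀ i, P.SameCycle i (q i) := by
    intro i
    have h2 : c.SameCycle ((c⁻¹ * P) i) (c⁻¹ ((c⁻¹ * P) i)) := ⟨-1, by simp⟩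
    have h4 : SRel l i (q i) := by
      have hqi : q i = c⁻¹ ((c⁻¹ * P) i) := by
        rw [hq, Equiv.Perm.mul_apply]
      rw [hqi]
      exact (hc2step i).trans (hcsub _ _ h2)
    exact (hSrel _ _).mp h4
  have hqsub : ∀ i j, q.SameCycle i j → P.SameCycle i j :=
    sameCycle_subset_rel (fun i => Equiv.Perm.SameCycle.refl _ _)
      (fun {i j} h => h.symm) (fun {i j k} h h' => h.trans h') hqstep
  -- q has the same cycles as P
  have hccq : (ldrs q.SameCycle).card ≤ (ldrs P.SameCycle).card := by
    rw [← cycleCount_eq_card, ← cycleCount_eq_card, cycleCount, cycleCount, ← hu'.2,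
      List.length_map]
  have hqiff : ∀ i j, P.SameCycle i j ↔ q.SameCycle i j :=
    rel_eq_sameCycle (g := q) (R := P.SameCycle) (fun {i j} h => h.symm)
      (fun {i j k} h h' => h.trans h') hqsub hccq
  have hminq : cycleMins q = cycleMins P :=
    cycleMins_congr (fun i j => (hqiff i j).symm)
  have hu'fix : ∀ m ∈ cycleMins P, u' m = m := by
    have h := hu'.2
    rw [hminq] at h
    have h2 : (cycleMins P).map ⇑u' = (cycleMins P).map id := by
      rw [h, List.map_id]
    exact map_eq_map h2
  -- algebra
  have hxyq : x⁻¹ * y = u * q * u⁻¹ := by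
    rw [hx, hy, hq]; group
  have hscxy : ∀ i j, (x⁻¹ * y).SameCycle i j ↔ r.SameCycle i j := by
    intro i j
    rw [hxyq, ← hu.1, Equiv.Perm.sameCycle_conj, Equiv.Perm.sameCycle_conj]
    exact (hqiff _ _).symm
  have hminxy : cycleMins (x⁻¹ * y) = cycleMins r := cycleMins_congr hscxy
  -- u * u' is a conjugator from P to x⁻¹ * y
  have hconj2 : IsConjugator P (x⁻¹ * y) (u * u') := by
    constructor
    · rw [hxyq]
      calc (u * u') * P * (u * u')⁻¹ = u * (u' * P * u'⁻¹) * u⁻¹ := by group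
      _ = u * q * u⁻¹ := by rw [hu'.1]
    · have hmap : (cycleMins P).map ⇑(u * u') = (cycleMins P).map ⇑u := by
        apply List.map_congr_left
        intro m hm
        show u (u' m) = u m
        rw [hu'fix m hm]
      rw [hmap, hu.2, ← hminxy]
  -- uniqueness of min-matching conjugators
  have hmapeq : ∀ m ∈ cycleMins P, w m = (u * u') m := by
    apply map_eq_map
    rw [hw.2, hconj2.2]
  apply Equiv.ext
  intro i
  obtain ⟨m, hmld, hmi⟩ := exists_cycleMin P i
  obtain ⟨k, hk⟩ := hmi
  have hmmem : m ∈ cycleMins P := mem_cycleMins.mpr hmld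
  have hsemi1 : w * P ^ k = (x⁻¹ * y) ^ k * w := by
    have hs : SemiconjBy w P (x⁻¹ * y) := by
      have : w * P = (x⁻¹ * y) * w := by rw [← hw.1]; group
      exact this
    exact hs.zpow_right k
  have hsemi2 : (u * u') * P ^ k = (x⁻¹ * y) ^ k * (u * u') := by
    have hs : SemiconjBy (u * u') P (x⁻¹ * y) := by
      have : (u * u') * P = (x⁻¹ * y) * (u * u') := by rw [← hconj2.1]; group
      exact this
    exact hs.zpow_right k
  have e1 : w i = ((x⁻¹ * y) ^ k) (w m) := by
    rw [← hk]
    have h := congrArg (fun σ : Equiv.Perm (Fin n) => σ m) hsemi1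
    simpa [Equiv.Perm.mul_apply] using h
  have e2 : (u * u') i = ((x⁻¹ * y) ^ k) ((u * u') m) := by
    rw [← hk]
    have h := congrArg (fun σ : Equiv.Perm (Fin n) => σ m) hsemi2
    simpa [Equiv.Perm.mul_apply] using h
  rw [e1, e2, hmapeq m hmmem]
end

section
/- For each composition mu of n, define delta(c) := u_{c^{-1}c^∨}^{-1} c^{-1} u_{c^{-1}c^∨} for c in Cr(mu). Then delta maps Cr(mu) into Cr(mu); i.e., delta(c) is again a midpoint of e and p_mu, with d(e, delta(c)) = d(e,c) and d(delta(c), p_mu) = d(c, p_mu). -/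
open Equiv

section Aux15

variable {n : ℕ}

private lemma trdist_eq_one15 (a b : Equiv.Perm (Fin n)) : trdist a b = trdist 1 (a⁻¹ * b) := by
  simp [trdist]

private def trset (x : Equiv.Perm (Fin n)) : Set ℕ :=
  {k | ∃ l : List (Equiv.Perm (Fin n)), l.length = k ∧ (∀ t ∈ l, t.IsSwap) ∧ l.prod = x}

private lemma trdist_one_eq_sInf (x : Equiv.Perm (Fin n)) : trdist 1 x = sInf (trset x) := by
  simp [trdist, trset]

private lemma trset_inv_subset (x : Equiv.Perm (Fin n)) : trset x ⊆ trset x⁻¹ := by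
  rintro k ⟨l, hlen, hsw, hprod⟩
  have hinv : ∀ t ∈ l, t⁻¹ = t := by
    intro t ht
    obtain ⟨a, b, -, rfl⟩ := hsw t ht
    simp
  refine ⟨l.reverse, by simpa using hlen, fun t ht => hsw t (by simpa using ht), ?_⟩
  have h2 : l.map (fun t : Equiv.Perm (Fin n) => t⁻¹) = l := by
    conv_rhs => rw [← List.map_id l]
    exact List.map_congr_left hinv
  have h1 : (l.map (fun t : Equiv.Perm (Fin n) => t⁻¹)).reverse.prod = (l.prod)⁻¹ :=
    (List.prod_inv_reverse l).symm
  rw [h2] at h1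
  rw [h1, hprod]

private lemma trdist_one_inv15 (x : Equiv.Perm (Fin n)) : trdist 1 x⁻¹ = trdist 1 x := by
  rw [trdist_one_eq_sInf, trdist_one_eq_sInf]
  refine congrArg sInf (Set.Subset.antisymm ?_ (trset_inv_subset x))
  have h := trset_inv_subset x⁻¹
  simpa using h

private lemma trset_conj_subset (u x : Equiv.Perm (Fin n)) :
    trset x ⊆ trset (u⁻¹ * x * u) := by
  rintro k ⟨l, hlen, hsw, hprod⟩
  refine ⟨l.map (fun t => u⁻¹ * t * u), by simpa using hlen, ?_, ?_⟩
  · intro t ht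
    simp only [List.mem_map] at ht
    obtain ⟨s, hs, rfl⟩ := ht
    obtain ⟨a, b, hab, rfl⟩ := hsw s hs
    refine ⟨u⁻¹ a, u⁻¹ b, fun h => hab (u⁻¹.injective h), ?_⟩
    rw [Equiv.swap_apply_apply u⁻¹ a b]
    simp [mul_assoc]
  · have hmul : ∀ l' : List (Equiv.Perm (Fin n)),
        (l'.map (fun t => u⁻¹ * t * u)).prod = u⁻¹ * l'.prod * u := by
      intro l'
      induction l' with
      | nil => simp
      | cons hd tl ih => simp only [List.map_cons, List.prod_cons, ih]; group
    rw [hmul, hprod]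

private lemma trdist_one_conj15 (u x : Equiv.Perm (Fin n)) :
    trdist 1 (u⁻¹ * x * u) = trdist 1 x := by
  rw [trdist_one_eq_sInf, trdist_one_eq_sInf]
  refine congrArg sInf (Set.Subset.antisymm ?_ (trset_conj_subset u x))
  have h2 := trset_conj_subset u⁻¹ (u⁻¹ * x * u)
  have h3 : u⁻¹⁻¹ * (u⁻¹ * x * u) * u⁻¹ = x := by group
  rwa [h3] at h2

end Aux15

theorem stmt15 (n : ℕ) (μ : List ℕ) (hpos : ∀ x ∈ μ, 0 < x) (hsum : μ.sum = n)
    (P c u' : Equiv.Perm (Fin n)) (hP : P = canonPerm n μ 0)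
    (hc : c ∈ midpts 1 P)
    (hu' : IsConjugator P (c⁻¹ * (c⁻¹ * P)) u') :
    u'⁻¹ * c⁻¹ * u' ∈ midpts 1 P ∧
    trdist 1 (u'⁻¹ * c⁻¹ * u') = trdist 1 c ∧
    trdist (u'⁻¹ * c⁻¹ * u') P = trdist c P := by
  obtain ⟨h1, h2⟩ := hc
  obtain ⟨hconj, -⟩ := hu'
  have key1 : trdist 1 (u'⁻¹ * c⁻¹ * u') = trdist 1 c := by
    rw [trdist_one_conj15, trdist_one_inv15]
  have hgrp : (u'⁻¹ * c⁻¹ * u')⁻¹ * P = u'⁻¹ * (c⁻¹ * P) * u' := by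
    have h4 : (u'⁻¹ * c⁻¹ * u')⁻¹ * P = u'⁻¹ * c * (u' * P * u'⁻¹) * u' := by group
    rw [h4, hconj]; group
  have key2 : trdist (u'⁻¹ * c⁻¹ * u') P = trdist c P := by
    rw [trdist_eq_one15 _ P, hgrp, trdist_one_conj15, ← trdist_eq_one15]
  refine ⟨⟨?_, ?_⟩, key1, key2⟩
  · rw [key1, key2]
    rw [trdist_eq_one15 1 c] at h1 ⊢
    simpa using h1
  · rw [key1, key2]
    rw [trdist_eq_one15 1 c] at h2 ⊢
    simpa using h2
end
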